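/- Along the level set {G = 0} inside Q₊, the product cR tends to ln(θ_hl/θ_ig) as R → 0⁺; precisely, for every ε > 0 there exists δ > 0 such that for all R, c with 0 < R < δ, c·θ_hl ≥ q·R and G(R, c) = 0, one has |cR − ln(θ_hl/θ_ig)| < ε. -/

import Mathlib

open Set Filter

/-- The transcendental function `G(R,c) = q(e^{cR} − 1 − cR) − c²(θ_ig e^{cR} − θ_hl)`. -/
noncomputable def G (q θig θhl R c : ℝ) : ℝ :=
  q * (Real.exp (c * R) - 1 - c * R) - c ^ 2 * (θig * Real.exp (c * R) - θhl)

/-- Along the level set `{G = 0}` inside `Q₊`, the product `cR` tends to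
`ln(θ_hl/θ_ig)` as `R → 0⁺`. -/
theorem stmt11 (q θig θhl : ℝ) (hq : 0 < q) (h1 : 0 < θig) (h2 : θig < θhl) :
    ∀ ε : ℝ, 0 < ε → ∃ δ : ℝ, 0 < δ ∧
      ∀ R c : ℝ, 0 < R → R < δ → q * R ≤ c * θhl → G q θig θhl R c = 0 →
        |c * R - Real.log (θhl / θig)| < ε := by
  intro ε hε
  set L := Real.log (θhl / θig) with hLdef
  have hθhl : 0 < θhl := h1.trans h2
  have hL0 : 0 < L := Real.log_pos (by rw [lt_div_iff₀ h1]; linarith)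
  have hexpε : Real.exp (-ε) < 1 := by
    rw [Real.exp_lt_one_iff]; linarith
  set m := (L + ε) ^ 2 * θig * (1 - Real.exp (-ε)) / q with hmdef
  have hm0 : 0 < m := by
    apply div_pos _ hq
    apply mul_pos (mul_pos (pow_pos (by linarith) 2) h1)
    linarith
  refine ⟨Real.sqrt m, Real.sqrt_pos.mpr hm0, ?_⟩
  intro R c hR hRδ hc hG
  set x := c * R with hxdef
  have hc0 : 0 < c := by nlinarith [mul_pos hq hR]
  have hx0 : 0 < x := mul_pos hc0 hR
  have hstrict : 1 + x < Real.exp x := by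
    have := Real.add_one_lt_exp (ne_of_gt hx0); linarith
  have hkey : q * (Real.exp x - 1 - x) = c ^ 2 * (θig * Real.exp x - θhl) := by
    have : G q θig θhl R c = 0 := hG
    unfold G at this
    rw [← hxdef] at this
    linarith
  have hc2 : 0 < c ^ 2 := pow_pos hc0 2
  have hqpos : 0 < q * (Real.exp x - 1 - x) := mul_pos hq (by linarith)
  have hpos2 : 0 < θig * Real.exp x - θhl := by nlinarith
  have hxL : L < x := by
    have h3 : θhl / θig < Real.exp x := by
      rw [div_lt_iff₀ h1]; nlinarith
    have := Real.log_lt_log (by positivity) h3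
    rwa [Real.log_exp] at this
  have hupper : x < L + ε := by
    by_contra hcon
    push_neg at hcon
    have hR2 : R ^ 2 < m := (Real.lt_sqrt hR.le).mp hRδ
    have hx2 : x ^ 2 = c ^ 2 * R ^ 2 := by rw [hxdef]; ring
    have heq2 : R ^ 2 * (q * (Real.exp x - 1 - x)) = x ^ 2 * (θig * Real.exp x - θhl) := by
      rw [hx2]; nlinarith [hkey]
    have hθ : θhl ≤ θig * Real.exp x * Real.exp (-ε) := by
      have hθeq : θhl = θig * Real.exp L := by
        rw [hLdef, Real.exp_log (by positivity)]
        field_simp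
      have hLe : Real.exp L ≤ Real.exp (x - ε) := Real.exp_le_exp.mpr (by linarith)
      rw [Real.exp_sub] at hLe
      rw [hθeq]
      calc θig * Real.exp L ≤ θig * (Real.exp x / Real.exp ε) := by
            exact mul_le_mul_of_nonneg_left hLe h1.le
        _ = θig * Real.exp x * Real.exp (-ε) := by
            rw [Real.exp_neg]; ring
    have hA : R ^ 2 * (q * (Real.exp x - 1 - x)) < m * (q * Real.exp x) := by
      have h1' : R ^ 2 * (q * (Real.exp x - 1 - x)) < m * (q * (Real.exp x - 1 - x)) :=
        mul_lt_mul_of_pos_right hR2 hqpos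
      have h2' : m * (q * (Real.exp x - 1 - x)) ≤ m * (q * Real.exp x) := by
        apply mul_le_mul_of_nonneg_left _ hm0.le
        apply mul_le_mul_of_nonneg_left _ hq.le
        linarith
      linarith
    have hmq : m * (q * Real.exp x) = (L + ε) ^ 2 * θig * (1 - Real.exp (-ε)) * Real.exp x := by
      rw [hmdef]; field_simp
    have hB : (L + ε) ^ 2 * (θig * Real.exp x - θhl) ≤ x ^ 2 * (θig * Real.exp x - θhl) := by
      exact mul_le_mul_of_nonneg_right (pow_le_pow_left₀ (by linarith) hcon 2) hpos2.le
    have hC : (L + ε) ^ 2 * θig * (1 - Real.exp (-ε)) * Real.exp x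
        ≤ (L + ε) ^ 2 * (θig * Real.exp x - θhl) := by
      have hY : θig * (1 - Real.exp (-ε)) * Real.exp x ≤ θig * Real.exp x - θhl := by
        linarith [hθ]
      calc (L + ε) ^ 2 * θig * (1 - Real.exp (-ε)) * Real.exp x
          = (L + ε) ^ 2 * (θig * (1 - Real.exp (-ε)) * Real.exp x) := by ring
        _ ≤ (L + ε) ^ 2 * (θig * Real.exp x - θhl) :=
            mul_le_mul_of_nonneg_left hY (sq_nonneg _)
    linarith
  rw [abs_lt]
  constructor <;> linarith
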